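/- arXiv:1008.4909 — 2 statements merged into one kernel-verified Lean document; each statement's English description precedes it below -/
import Mathlib

section
/- Let $G$ be a non-trivial finite group. The Chebotarev invariant of $G$ satisfies $c(G) = \sum_{\emptyset \ne I \subseteq \max(G)} (-1)^{|I|+1} / (1 - \nu(\mathcal{H}_I^{\sharp}))$. -/
open MeasureTheory ProbabilityTheory Pointwise ENNReal

namespace Chebotarev

variable {G : Type*} [Group G]

/-- The conjugacy classes of the tuple `x 0, …, x (n-1)` *generate* `G`: every choice of
representatives from these conjugacy classes generates `G`. -/
def InvGen {n : ℕ} (x : Fin n → G) : Prop :=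
  ∀ y : Fin n → G, (∀ i, IsConj (x i) (y i)) → Subgroup.closure (Set.range y) = ⊤

/-- The waiting time `τ = min {n ≥ 1 | the conjugacy classes of X₁, …, Xₙ generate G}`,
with value `∞` if no such `n` exists. -/
noncomputable def tau {Ω : Type*} (X : ℕ → Ω → G) (ω : Ω) : ℝ≥0∞ :=
  sInf {t : ℝ≥0∞ | ∃ n : ℕ, t = n ∧ 1 ≤ n ∧ InvGen (fun i : Fin n => X i ω)}

/-- `(Xₙ)` is a sequence of independent random variables, each uniformly distributed
on the (finite) group `G`, on a probability space `(Ω, P)`. -/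
def IsChebSetup {Ω : Type*} [MeasurableSpace Ω] (P : Measure Ω) (X : ℕ → Ω → G) : Prop :=
  IsProbabilityMeasure P ∧ (∀ n, @Measurable Ω G _ ⊤ (X n)) ∧
    iIndepFun (m := fun _ : ℕ => (⊤ : MeasurableSpace G)) X P ∧
    ∀ (n : ℕ) (g : G), P {ω | X n ω = g} = (Nat.card G : ℝ≥0∞)⁻¹

/-- The Chebotarev invariant `c(G) = E(τ)`. -/
noncomputable def cheb {Ω : Type*} [MeasurableSpace Ω] (P : Measure Ω) (X : ℕ → Ω → G) : ℝ :=
  (∫⁻ ω, tau X ω ∂P).toReal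

/-- The secondary Chebotarev invariant `s(G) = E(τ²)`. -/
noncomputable def scheb {Ω : Type*} [MeasurableSpace Ω] (P : Measure Ω) (X : ℕ → Ω → G) : ℝ :=
  (∫⁻ ω, (tau X ω) ^ 2 ∂P).toReal

/-- normalized density `ν(A) = |A| / |G|`. -/
noncomputable def nu (G : Type*) [Group G] (A : Set G) : ℝ :=
  (Nat.card A : ℝ) / (Nat.card G : ℝ)

/-- Conjugacy classes of subgroups of `G` (orbits of the conjugation action). -/
abbrev SubConjClass (G : Type*) [Group G] :=
  Quotient (MulAction.orbitRel (ConjAct G) (Subgroup G))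

/-- The conjugacy class of a subgroup. -/
def cls (H : Subgroup G) : SubConjClass G :=
  Quotient.mk (MulAction.orbitRel (ConjAct G) (Subgroup G)) H

/-- `max(G)`: the (finite) set of conjugacy classes of maximal proper subgroups of `G`. -/
noncomputable def maxClasses (G : Type*) [Group G] [Finite G] : Finset (SubConjClass G) :=
  haveI : Finite (Subgroup G) :=
    Finite.of_injective (fun H => (H : Set G)) SetLike.coe_injective
  Set.Finite.toFinset (Set.toFinite {c : SubConjClass G | ∃ H : Subgroup G, cls H = c ∧ IsCoatom H})

/-- `𝓗♯`: the set of elements of `G` conjugate to an element of some subgroup in the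
conjugacy class `c` of subgroups. -/
def sharp (c : SubConjClass G) : Set G :=
  {x : G | ∃ H : Subgroup G, cls H = c ∧ ∃ h ∈ H, IsConj h x}

end Chebotarev

open Chebotarev

/-! ### Auxiliary lemmas -/

section IE
variable {Ω ι : Type*}

/-- Pointwise (indicator) inclusion-exclusion identity. -/
lemma aux_indicator_IE [DecidableEq ι] (S : Finset ι) (E : ι → Set Ω) (ω : Ω) :
    Set.indicator (⋃ c ∈ S, E c) (fun _ => (1:ℝ)) ω
      = ∑ I ∈ S.powerset.filter Finset.Nonempty,
          (-1:ℝ) ^ (I.card + 1) * Set.indicator (⋂ c ∈ I, E c) (fun _ => (1:ℝ)) ω := by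
  classical
  set t := S.filter (fun c => ω ∈ E c) with ht
  have hsub : t ⊆ S := Finset.filter_subset _ _
  have hmem : ∀ c ∈ S, (ω ∈ E c ↔ c ∈ t) := fun c hc => by simp [ht, hc]
  have hind : ∀ I : Finset ι, I ⊆ S →
      Set.indicator (⋂ c ∈ I, E c) (fun _ => (1:ℝ)) ω = if I ⊆ t then 1 else 0 := by
    intro I hI
    by_cases h : I ⊆ t
    · rw [if_pos h, Set.indicator_of_mem]
      simp only [Set.mem_iInter]
      exact fun c hc => (hmem c (hI hc)).2 (h hc)
    · rw [if_neg h, Set.indicator_of_notMem]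
      obtain ⟨c, hcI, hct⟩ := Finset.not_subset.1 h
      simp only [Set.mem_iInter, not_forall]
      exact ⟨c, hcI, fun hc => hct ((hmem c (hI hcI)).1 hc)⟩
  have hrhs : ∑ I ∈ S.powerset.filter Finset.Nonempty,
        (-1:ℝ) ^ (I.card + 1) * Set.indicator (⋂ c ∈ I, E c) (fun _ => (1:ℝ)) ω
      = ∑ I ∈ t.powerset.filter Finset.Nonempty, (-1:ℝ) ^ (I.card + 1) := by
    calc ∑ I ∈ S.powerset.filter Finset.Nonempty,
          (-1:ℝ) ^ (I.card + 1) * Set.indicator (⋂ c ∈ I, E c) (fun _ => (1:ℝ)) ω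
        = ∑ I ∈ S.powerset.filter Finset.Nonempty,
            (if I ⊆ t then (-1:ℝ) ^ (I.card + 1) else 0) := by
          refine Finset.sum_congr rfl fun I hI => ?_
          rw [hind I (Finset.mem_powerset.1 (Finset.mem_of_mem_filter I hI)),
            mul_ite, mul_one, mul_zero]
      _ = ∑ I ∈ (S.powerset.filter Finset.Nonempty).filter (· ⊆ t),
            (-1:ℝ) ^ (I.card + 1) := (Finset.sum_filter _ _).symm
      _ = ∑ I ∈ t.powerset.filter Finset.Nonempty, (-1:ℝ) ^ (I.card + 1) := by
          congr 1
          ext I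
          simp only [Finset.mem_filter, Finset.mem_powerset]
          exact ⟨fun h => ⟨h.2, h.1.2⟩, fun h => ⟨⟨h.1.trans hsub, h.2⟩, h.1⟩⟩
  rw [hrhs]
  by_cases hte : t = ∅
  · have hω : ω ∉ ⋃ c ∈ S, E c := by
      simp only [Set.mem_iUnion, not_exists]
      intro c hc hEc
      exact absurd ((hmem c hc).1 hEc) (by simp [hte])
    rw [Set.indicator_of_notMem hω, hte, Finset.powerset_empty, Finset.filter_singleton]
    simp
  · have htne : t.Nonempty := Finset.nonempty_iff_ne_empty.2 hte
    obtain ⟨c, hc⟩ := htne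
    have hω : ω ∈ ⋃ c ∈ S, E c :=
      Set.mem_biUnion (hsub hc) ((hmem c (hsub hc)).2 hc)
    rw [Set.indicator_of_mem hω]
    have hz : (∑ I ∈ t.powerset, (-1:ℝ) ^ I.card) = 0 := by
      exact_mod_cast Finset.sum_powerset_neg_one_pow_card_of_nonempty ⟨c, hc⟩
    have hfe : t.powerset.filter Finset.Nonempty = t.powerset.erase ∅ := by
      ext I
      simp [Finset.mem_filter, Finset.mem_erase, Finset.nonempty_iff_ne_empty, and_comm]
    rw [hfe]
    have h3 := Finset.add_sum_erase t.powerset (fun I => (-1:ℝ) ^ (I.card + 1))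
      (Finset.empty_mem_powerset t)
    have h4 : ∑ I ∈ t.powerset, (-1:ℝ) ^ (I.card + 1) = 0 := by
      rw [Finset.sum_congr rfl (fun I (_ : I ∈ t.powerset) =>
        (by ring : (-1:ℝ) ^ (I.card + 1) = (-1) * (-1:ℝ) ^ I.card)), ← Finset.mul_sum, hz,
        mul_zero]
    rw [h4] at h3
    simp only [Finset.card_empty, pow_one, zero_add, pow_succ] at h3 ⊢
    linarith [h3]

/-- Inclusion-exclusion for a finite measure. -/
lemma aux_measure_IE [MeasurableSpace Ω] (μ : Measure Ω) [IsFiniteMeasure μ]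
    [DecidableEq ι] (S : Finset ι) (E : ι → Set Ω) (hE : ∀ c, MeasurableSet (E c)) :
    (μ (⋃ c ∈ S, E c)).toReal
      = ∑ I ∈ S.powerset.filter Finset.Nonempty,
          (-1:ℝ) ^ (I.card + 1) * (μ (⋂ c ∈ I, E c)).toReal := by
  have hU : MeasurableSet (⋃ c ∈ S, E c) :=
    MeasurableSet.biUnion S.countable_toSet fun c _ => hE c
  have hIm : ∀ I : Finset ι, MeasurableSet (⋂ c ∈ I, E c) := fun I =>
    MeasurableSet.biInter I.countable_toSet fun c _ => hE c
  have h1 : (μ (⋃ c ∈ S, E c)).toReal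
      = ∫ ω, Set.indicator (⋃ c ∈ S, E c) (fun _ => (1:ℝ)) ω ∂μ := by
    rw [integral_indicator_const (1:ℝ) hU, smul_eq_mul, mul_one]; rfl
  rw [h1]
  rw [integral_congr_ae (Filter.Eventually.of_forall fun ω => aux_indicator_IE S E ω)]
  rw [integral_finset_sum _ (fun I _ =>
    (((integrable_const (1:ℝ)).indicator (hIm I)).const_mul _))]
  refine Finset.sum_congr rfl fun I _ => ?_
  rw [integral_const_mul, integral_indicator_const (1:ℝ) (hIm I), smul_eq_mul, mul_one]; rfl

end IE

namespace Chebotarev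
variable {G : Type*} [Group G]

/-- In a finite group, no proper subgroup meets every conjugacy class. -/
lemma aux_exists_not_conj [Finite G] {M : Subgroup G} (hM : M ≠ ⊤) :
    ∃ a : G, ∀ x : G, x⁻¹ * a * x ∉ M := by
  classical
  cases nonempty_fintype G
  by_contra hcon
  push_neg at hcon
  letI : Fintype (G ⧸ M) := Fintype.ofFinite _
  letI : ∀ a : G, Fintype (MulAction.fixedBy (G ⧸ M) a) := fun a => Fintype.ofFinite _
  letI : Fintype (Quotient (MulAction.orbitRel G (G ⧸ M))) := Fintype.ofFinite _
  have hcard := MulAction.sum_card_fixedBy_eq_card_orbits_mul_card_group G (G ⧸ M)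
  have hsmul : ∀ (a x : G), a • ((x : G ⧸ M)) = ((a * x : G) : G ⧸ M) := fun a x => rfl
  have horb : Fintype.card (Quotient (MulAction.orbitRel G (G ⧸ M))) = 1 := by
    rw [Fintype.card_eq_one_iff]
    refine ⟨⟦((1 : G) : G ⧸ M)⟧, fun z => ?_⟩
    induction z using Quotient.inductionOn with
    | h q =>
      obtain ⟨x, rfl⟩ := QuotientGroup.mk_surjective q
      refine Quotient.sound ?_
      change (x : G ⧸ M) ∈ MulAction.orbit G (((1:G) : G ⧸ M))
      exact ⟨x, by show x • ((1:G) : G ⧸ M) = (x : G ⧸ M); rw [hsmul, mul_one]⟩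
  have hindex : 2 ≤ Fintype.card (G ⧸ M) := by
    have := Subgroup.one_lt_index_of_ne_top (H := M) hM
    rwa [Subgroup.index, Nat.card_eq_fintype_card] at this
  have hfix1 : 2 ≤ Fintype.card (MulAction.fixedBy (G ⧸ M) (1 : G)) := by
    obtain ⟨q1, q2, hq⟩ := Fintype.exists_pair_of_one_lt_card (α := G ⧸ M) (by omega)
    have m1 : q1 ∈ MulAction.fixedBy (G ⧸ M) (1 : G) := one_smul _ _
    have m2 : q2 ∈ MulAction.fixedBy (G ⧸ M) (1 : G) := one_smul _ _
    have : Nontrivial (MulAction.fixedBy (G ⧸ M) (1 : G)) :=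
      ⟨⟨⟨q1, m1⟩, ⟨q2, m2⟩, fun h => hq (congrArg Subtype.val h)⟩⟩
    exact Fintype.one_lt_card
  have hfix : ∀ a : G, 1 ≤ Fintype.card (MulAction.fixedBy (G ⧸ M) a) := by
    intro a
    obtain ⟨x, hx⟩ := hcon a⁻¹
    refine Fintype.card_pos_iff.2 ⟨⟨(x : G ⧸ M), ?_⟩⟩
    show a • ((x : G ⧸ M)) = (x : G ⧸ M)
    rw [hsmul, QuotientGroup.eq]
    convert hx using 1
    group
  have hbound : Fintype.card G + 1 ≤ ∑ a : G, Fintype.card (MulAction.fixedBy (G ⧸ M) a) := by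
    rw [← Finset.add_sum_erase Finset.univ _ (Finset.mem_univ (1 : G))]
    have h5 : Fintype.card G - 1 ≤ ∑ a ∈ Finset.univ.erase (1 : G),
        Fintype.card (MulAction.fixedBy (G ⧸ M) a) := by
      calc Fintype.card G - 1 = ∑ _a ∈ Finset.univ.erase (1 : G), 1 := by
            rw [Finset.sum_const, smul_eq_mul, mul_one,
              Finset.card_erase_of_mem (Finset.mem_univ _), Finset.card_univ]
        _ ≤ _ := Finset.sum_le_sum fun a _ => hfix a
    have hGpos : 1 ≤ Fintype.card G := Fintype.card_pos
    omega
  rw [hcard, horb, one_mul] at hbound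
  omega

lemma cls_eq_iff {H M : Subgroup G} : cls H = cls M ↔ ∃ g : ConjAct G, g • M = H := by
  rw [cls, cls, Quotient.eq]
  change H ∈ MulAction.orbit (ConjAct G) M ↔ _
  rw [MulAction.mem_orbit_iff]

lemma mem_sharp_iff {M : Subgroup G} {a : G} :
    a ∈ sharp (cls M) ↔ ∃ x : G, x⁻¹ * a * x ∈ M := by
  constructor
  · rintro ⟨H, hH, h, hhH, hconj⟩
    obtain ⟨g, hg⟩ := cls_eq_iff.1 hH
    rw [← hg, Subgroup.mem_pointwise_smul_iff_inv_smul_mem] at hhH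
    rw [ConjAct.smul_def] at hhH
    obtain ⟨u, hu⟩ := isConj_iff.1 hconj
    refine ⟨u * ConjAct.ofConjAct g, ?_⟩
    have : (u * ConjAct.ofConjAct g)⁻¹ * a * (u * ConjAct.ofConjAct g)
        = ConjAct.ofConjAct g⁻¹ * h * (ConjAct.ofConjAct g⁻¹)⁻¹ := by
      rw [← hu]; simp [map_inv]; group
    rw [this]
    exact hhH
  · rintro ⟨x, hx⟩
    refine ⟨ConjAct.toConjAct x • M, cls_eq_iff.2 ⟨ConjAct.toConjAct x, rfl⟩, a, ?_, IsConj.refl a⟩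
    rw [Subgroup.mem_pointwise_smul_iff_inv_smul_mem, ConjAct.smul_def]
    convert hx using 1
    simp

lemma mem_maxClasses_iff [Finite G] {c : SubConjClass G} :
    c ∈ maxClasses G ↔ ∃ H : Subgroup G, cls H = c ∧ IsCoatom H := by
  rw [maxClasses, Set.Finite.mem_toFinset, Set.mem_setOf_eq]

lemma not_invGen_iff [Finite G] {n : ℕ} (x : Fin n → G) :
    ¬ InvGen x ↔ ∃ c ∈ maxClasses G, ∀ i, x i ∈ sharp c := by
  constructor
  · intro h
    rw [InvGen] at h
    push_neg at h
    obtain ⟨y, hconj, hne⟩ := h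
    haveI : Finite (Subgroup G) :=
      Finite.of_injective (fun H => (H : Set G)) SetLike.coe_injective
    rcases (IsCoatomic.eq_top_or_exists_le_coatom (Subgroup.closure (Set.range y))) with
      heq | ⟨M, hM, hle⟩
    · exact absurd heq hne
    · refine ⟨cls M, mem_maxClasses_iff.2 ⟨M, rfl, hM⟩, fun i => ?_⟩
      obtain ⟨u, hu⟩ := isConj_iff.1 (hconj i)
      refine mem_sharp_iff.2 ⟨u⁻¹, ?_⟩
      have hyM : y i ∈ M := hle (Subgroup.subset_closure (Set.mem_range_self i))
      have : u⁻¹⁻¹ * x i * u⁻¹ = y i := by rw [← hu]; group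
      rwa [this]
  · rintro ⟨c, hc, hx⟩ hgen
    obtain ⟨M, rfl, hM⟩ := mem_maxClasses_iff.1 hc
    choose u hu using fun i => mem_sharp_iff.1 (hx i)
    have hconj : ∀ i, IsConj (x i) ((u i)⁻¹ * x i * (u i)) := fun i =>
      isConj_iff.2 ⟨(u i)⁻¹, by group⟩
    have htop := hgen _ hconj
    have hle : Subgroup.closure (Set.range fun i => (u i)⁻¹ * x i * (u i)) ≤ M := by
      rw [Subgroup.closure_le]
      rintro _ ⟨i, rfl⟩
      exact hu i
    rw [htop] at hle
    exact hM.1 (top_le_iff.1 hle)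

lemma not_invGen_zero [Nontrivial G] (z : Fin 0 → G) : ¬ InvGen z := by
  intro h
  have := h z (fun i => i.elim0)
  rw [Set.range_eq_empty, Subgroup.closure_empty] at this
  obtain ⟨g, hg⟩ := exists_ne (1 : G)
  exact hg (Subgroup.mem_bot.1 (this ▸ Subgroup.mem_top g))

lemma invGen_mono {x : ℕ → G} {m n : ℕ} (hmn : m ≤ n)
    (h : InvGen (fun i : Fin m => x i)) : InvGen (fun i : Fin n => x i) := by
  intro y hy
  have hgen' := h (fun i => y (Fin.castLE hmn i)) (fun i => hy (Fin.castLE hmn i))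
  rw [eq_top_iff, ← hgen']
  exact Subgroup.closure_mono (by rintro _ ⟨i, rfl⟩; exact ⟨Fin.castLE hmn i, rfl⟩)

section Tau
variable {Ω : Type*} [Nontrivial G] (X : ℕ → Ω → G)

lemma tau_eq_tsum (ω : Ω) :
    tau X ω = ∑' n : ℕ,
      Set.indicator {ω' | ¬ InvGen (fun i : Fin n => X i ω')} (fun _ => (1:ℝ≥0∞)) ω := by
  classical
  by_cases hex : ∃ m : ℕ, InvGen (fun i : Fin m => X i ω)
  · have hfind := Nat.find_spec hex
    set m := Nat.find hex with hm
    have hiff : ∀ n : ℕ, ¬ InvGen (fun i : Fin n => X i ω) ↔ n < m := by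
      intro n
      constructor
      · intro h
        by_contra hc
        push_neg at hc
        exact h (invGen_mono (x := fun k => X k ω) hc hfind)
      · intro h hgen
        exact absurd (Nat.find_min' hex hgen) (not_le.2 h)
    have htau : tau X ω = m := by
      apply le_antisymm
      · refine sInf_le ⟨m, rfl, ?_, hfind⟩
        rcases Nat.eq_zero_or_pos m with h0 | h1
        · exact absurd (h0 ▸ hfind) (not_invGen_zero _)
        · exact h1
      · refine le_sInf ?_
        rintro t ⟨k, rfl, hk1, hgenk⟩
        exact_mod_cast Nat.find_min' hex hgenk
    have hind : ∀ n : ℕ, Set.indicator {ω' | ¬ InvGen (fun i : Fin n => X i ω')}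
        (fun _ => (1:ℝ≥0∞)) ω = if n < m then (1:ℝ≥0∞) else 0 := by
      intro n
      by_cases h : n < m
      · rw [if_pos h, Set.indicator_of_mem
          (show ω ∈ {ω' | ¬ InvGen fun i : Fin n => X i ω'} from (hiff n).2 h)]
      · rw [if_neg h, Set.indicator_of_notMem
          (show ω ∉ {ω' | ¬ InvGen fun i : Fin n => X i ω'} from fun hmem => h ((hiff n).1 hmem))]
    rw [htau, tsum_congr hind,
      tsum_eq_sum (s := Finset.range m) (fun n hn => if_neg (by simpa using hn)),
      Finset.sum_congr rfl (fun n hn => if_pos (Finset.mem_range.1 hn)),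
      Finset.sum_const, Finset.card_range, nsmul_eq_mul, mul_one]
  · push_neg at hex
    have htau : tau X ω = ⊤ := by
      have hempty : {t : ℝ≥0∞ | ∃ n : ℕ, t = n ∧ 1 ≤ n ∧ InvGen (fun i : Fin n => X i ω)} = ∅ := by
        ext t
        simp only [Set.mem_setOf_eq, Set.mem_empty_iff_false, iff_false, not_exists]
        rintro n ⟨rfl, hn, hgen⟩
        exact hex n hgen
      rw [tau, hempty, sInf_empty]
    have hone : ∀ n : ℕ, Set.indicator {ω' | ¬ InvGen (fun i : Fin n => X i ω')}
        (fun _ => (1:ℝ≥0∞)) ω = 1 := fun n => Set.indicator_of_mem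
      (show ω ∈ {ω' | ¬ InvGen fun i : Fin n => X i ω'} from hex n) _
    rw [htau, tsum_congr hone]
    exact (ENNReal.tsum_const_eq_top_of_ne_zero one_ne_zero).symm

end Tau
end Chebotarev

/-- **Proposition (formula for the Chebotarev invariant).** For a non-trivial finite group `G`,
`c(G) = ∑_{∅ ≠ I ⊆ max(G)} (-1)^{|I|+1} / (1 - ν(𝓗_I♯))`. -/
theorem chebotarev_invariant_formula {G : Type*} [Group G] [Finite G] [Nontrivial G]
    {Ω : Type*} [MeasurableSpace Ω] (P : Measure Ω) (X : ℕ → Ω → G)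
    (hX : IsChebSetup P X) :
    cheb P X = ∑ I ∈ (maxClasses G).powerset.filter Finset.Nonempty,
      (-1 : ℝ) ^ (I.card + 1) / (1 - nu G (⋂ c ∈ I, sharp c)) := by
  classical
  obtain ⟨hP, hmeas, hindep, hunif⟩ := hX
  haveI := hP
  cases nonempty_fintype G
  have hXmeas : ∀ (i : ℕ) (A : Set G), MeasurableSet (X i ⁻¹' A) :=
    fun i A => (hmeas i) MeasurableSpace.measurableSet_top
  -- probability of a single preimage
  have hpre : ∀ (i : ℕ) (A : Set G), P (X i ⁻¹' A) = ENNReal.ofReal (nu G A) := by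
    intro i A
    have hsplit : X i ⁻¹' A = ⋃ g ∈ A.toFinset, {ω | X i ω = g} := by
      ext ω
      simp only [Set.mem_preimage, Set.mem_iUnion, Set.mem_toFinset, Set.mem_setOf_eq]
      exact ⟨fun h => ⟨X i ω, h, rfl⟩, fun ⟨g, hg, he⟩ => he ▸ hg⟩
    have hdisj : (↑A.toFinset : Set G).PairwiseDisjoint (fun g => {ω | X i ω = g}) := by
      intro g _ g' _ hgg'
      refine Set.disjoint_left.2 fun ω h1 h2 => hgg' ?_
      rw [← h1, ← h2]
    rw [hsplit, measure_biUnion_finset hdisj (fun g _ => hXmeas i {g})]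
    rw [Finset.sum_congr rfl (fun g _ => hunif i g), Finset.sum_const, nsmul_eq_mul]
    rw [nu, ENNReal.ofReal_div_of_pos (by exact_mod_cast Nat.card_pos),
      ENNReal.ofReal_natCast, ENNReal.ofReal_natCast, div_eq_mul_inv]
    congr 2
    rw [Nat.card_coe_set_eq, Set.ncard_eq_toFinset_card']
  -- measurability of the basic events
  have hsharpmeas : ∀ (n : ℕ) (c : SubConjClass G),
      MeasurableSet (⋂ i ∈ Finset.range n, X i ⁻¹' sharp c) :=
    fun n c => MeasurableSet.biInter (Finset.range n).countable_toSet (fun i _ => hXmeas i _)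
  -- the event that the first n classes do not invariably generate
  have hbad_eq : ∀ n : ℕ, {ω | ¬ InvGen (fun i : Fin n => X i ω)}
      = ⋃ c ∈ maxClasses G, ⋂ i ∈ Finset.range n, X i ⁻¹' sharp c := by
    intro n
    ext ω
    simp only [Set.mem_setOf_eq, not_invGen_iff, Set.mem_iUnion, Set.mem_iInter,
      Set.mem_preimage, Finset.mem_range]
    constructor
    · rintro ⟨c, hc, h⟩
      exact ⟨c, hc, fun i hi => h ⟨i, hi⟩⟩
    · rintro ⟨c, hc, h⟩
      exact ⟨c, hc, fun i => h i i.isLt⟩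
  have hBmeas : ∀ n : ℕ, MeasurableSet {ω | ¬ InvGen (fun i : Fin n => X i ω)} := by
    intro n
    rw [hbad_eq n]
    exact MeasurableSet.biUnion (maxClasses G).countable_toSet (fun c _ => hsharpmeas n c)
  -- expectation of τ as a sum of tail probabilities
  have hlint : ∫⁻ ω, tau X ω ∂P = ∑' n : ℕ, P {ω | ¬ InvGen (fun i : Fin n => X i ω)} := by
    rw [lintegral_congr (tau_eq_tsum X),
      lintegral_tsum (fun n => (measurable_const.indicator (hBmeas n)).aemeasurable)]
    exact tsum_congr fun n => lintegral_indicator_one (hBmeas n)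
  -- independence: probability of joint event
  have hkey : ∀ (n : ℕ) (A : Set G),
      P (⋂ i ∈ Finset.range n, X i ⁻¹' A) = ENNReal.ofReal (nu G A) ^ n := by
    intro n A
    rw [hindep.measure_inter_preimage_eq_mul (Finset.range n)
        (sets := fun _ => A) (fun i _ => MeasurableSpace.measurableSet_top),
      Finset.prod_congr rfl (fun i _ => hpre i A), Finset.prod_const, Finset.card_range]
  have hnu_nonneg : ∀ A : Set G, 0 ≤ nu G A :=
    fun A => div_nonneg (Nat.cast_nonneg _) (Nat.cast_nonneg _)
  -- tail probabilities via inclusion-exclusion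
  have hp : ∀ n : ℕ, (P {ω | ¬ InvGen (fun i : Fin n => X i ω)}).toReal
      = ∑ I ∈ (maxClasses G).powerset.filter Finset.Nonempty,
          (-1:ℝ) ^ (I.card + 1) * (nu G (⋂ c ∈ I, sharp c)) ^ n := by
    intro n
    rw [hbad_eq n, aux_measure_IE P (maxClasses G) _ (fun c => hsharpmeas n c)]
    refine Finset.sum_congr rfl fun I hI => ?_
    congr 1
    have hswap : (⋂ c ∈ I, ⋂ i ∈ Finset.range n, X i ⁻¹' sharp c)
        = ⋂ i ∈ Finset.range n, X i ⁻¹' (⋂ c ∈ I, sharp c) := by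
      ext ω
      simp only [Set.mem_iInter, Set.mem_preimage]
      exact ⟨fun h i hi c hc => h c hc i hi, fun h c hc i hi => h i hi c hc⟩
    rw [hswap, hkey n _, ← ENNReal.ofReal_pow (hnu_nonneg _),
      ENNReal.toReal_ofReal (pow_nonneg (hnu_nonneg _) n)]
  -- the densities are strictly less than 1
  have hr1 : ∀ I ∈ (maxClasses G).powerset.filter Finset.Nonempty,
      nu G (⋂ c ∈ I, sharp c) < 1 := by
    intro I hI
    rw [Finset.mem_filter, Finset.mem_powerset] at hI
    obtain ⟨hIS, c, hc⟩ := hI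
    obtain ⟨M, hMc, hM⟩ := mem_maxClasses_iff.1 (hIS hc)
    obtain ⟨a, ha⟩ := aux_exists_not_conj hM.1
    have hanot : a ∉ sharp c := by
      rw [← hMc, mem_sharp_iff]
      push_neg
      exact fun x => ha x
    have hlt : (⋂ c' ∈ I, sharp c').ncard < Nat.card G := by
      rw [← Set.ncard_univ]
      refine Set.ncard_lt_ncard ⟨Set.subset_univ _, fun hcon => hanot ?_⟩ Set.finite_univ
      exact Set.mem_iInter₂.1 (hcon (Set.mem_univ a)) c hc
    rw [nu, div_lt_one (by exact_mod_cast Nat.card_pos), Nat.card_coe_set_eq]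
    exact_mod_cast hlt
  have hsummand : ∀ I ∈ (maxClasses G).powerset.filter Finset.Nonempty,
      Summable (fun n : ℕ => (-1:ℝ) ^ (I.card + 1) * (nu G (⋂ c ∈ I, sharp c)) ^ n) :=
    fun I hI => (summable_geometric_of_lt_one (hnu_nonneg _) (hr1 I hI)).mul_left _
  have hpsum : Summable (fun n : ℕ => ∑ I ∈ (maxClasses G).powerset.filter Finset.Nonempty,
      (-1:ℝ) ^ (I.card + 1) * (nu G (⋂ c ∈ I, sharp c)) ^ n) := summable_sum hsummand
  have hpnonneg : ∀ n : ℕ, 0 ≤ ∑ I ∈ (maxClasses G).powerset.filter Finset.Nonempty,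
      (-1:ℝ) ^ (I.card + 1) * (nu G (⋂ c ∈ I, sharp c)) ^ n := by
    intro n
    rw [← hp n]
    exact ENNReal.toReal_nonneg
  have hPof : ∀ n : ℕ, P {ω | ¬ InvGen (fun i : Fin n => X i ω)}
      = ENNReal.ofReal (∑ I ∈ (maxClasses G).powerset.filter Finset.Nonempty,
          (-1:ℝ) ^ (I.card + 1) * (nu G (⋂ c ∈ I, sharp c)) ^ n) := by
    intro n
    rw [← hp n, ENNReal.ofReal_toReal (measure_ne_top P _)]
  rw [cheb, hlint, tsum_congr hPof, ← ENNReal.ofReal_tsum_of_nonneg hpnonneg hpsum,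
    ENNReal.toReal_ofReal (tsum_nonneg hpnonneg), Summable.tsum_finsetSum hsummand]
  refine Finset.sum_congr rfl fun I hI => ?_
  rw [tsum_mul_left, tsum_geometric_of_lt_one (hnu_nonneg _) (hr1 I hI), div_eq_mul_inv]
end

section
/- Let $G$ be a non-trivial finite group. The secondary Chebotarev invariant of $G$ satisfies $s(G) = \sum_{\emptyset \ne I \subseteq \max(G)} (-1)^{|I|+1} \,(1 + \nu(\mathcal{H}_I^{\sharp})) / (1 - \nu(\mathcal{H}_I^{\sharp}))^2$. -/
open MeasureTheory ProbabilityTheory Pointwise ENNReal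

open Chebotarev


namespace ChebAux
open Chebotarev

variable {G : Type*} [Group G]

lemma mem_sharp_cls {H : Subgroup G} {x : G} :
    x ∈ sharp (cls H) ↔ ∃ h ∈ H, IsConj h x := by
  constructor
  · rintro ⟨H', hH', h, hh, hconj⟩
    have : H' ∈ MulAction.orbit (ConjAct G) H := Quotient.eq''.mp hH'
    obtain ⟨g, rfl⟩ := this
    rw [Subgroup.mem_smul_pointwise_iff_exists] at hh
    obtain ⟨s, hs, rfl⟩ := hh
    refine ⟨s, hs, IsConj.trans ?_ hconj⟩
    rw [ConjAct.smul_def]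
    exact isConj_iff.mpr ⟨ConjAct.ofConjAct g, rfl⟩
  · rintro ⟨h, hh, hconj⟩
    exact ⟨H, rfl, h, hh, hconj⟩

lemma invGen_mono {m n : ℕ} (h : m ≤ n) (x : ℕ → G)
    (hm : InvGen (fun i : Fin m => x i)) : InvGen (fun i : Fin n => x i) := by
  intro y hy
  classical
  rw [eq_top_iff, ← hm (fun i => y (Fin.castLE h i)) (fun i => hy (Fin.castLE h i))]
  exact Subgroup.closure_mono (Set.range_comp_subset_range _ y)

lemma not_invGen_zero [Nontrivial G] (x : Fin 0 → G) : ¬ InvGen x := by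
  intro hx
  have := hx (fun i => i.elim0) (fun i => i.elim0)
  rw [Set.range_eq_empty, Subgroup.closure_empty] at this
  exact bot_ne_top this

lemma exists_of_mem_maxClasses [Finite G] {c : SubConjClass G} (hc : c ∈ maxClasses G) :
    ∃ H : Subgroup G, cls H = c ∧ IsCoatom H := by
  simpa [maxClasses] using hc

lemma not_invGen_iff [Finite G] {n : ℕ} (x : Fin n → G) :
    ¬ InvGen x ↔ ∃ c ∈ maxClasses G, ∀ i, x i ∈ sharp c := by
  haveI : Finite (Subgroup G) :=
    Finite.of_injective (fun H => (H : Set G)) SetLike.coe_injective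
  constructor
  · intro hx
    rw [InvGen] at hx
    push_neg at hx
    obtain ⟨y, hy, hne⟩ := hx
    obtain ⟨M, hM, hle⟩ :=
      (eq_top_or_exists_le_coatom (Subgroup.closure (Set.range y))).resolve_left hne
    refine ⟨cls M, ?_, fun i => ?_⟩
    · simp only [maxClasses, Set.Finite.mem_toFinset, Set.mem_setOf_eq]
      exact ⟨M, rfl, hM⟩
    · exact mem_sharp_cls.mpr ⟨y i, hle (Subgroup.subset_closure ⟨i, rfl⟩), (hy i).symm⟩
  · rintro ⟨c, hc, hmem⟩ hx
    obtain ⟨M, rfl, hM⟩ := exists_of_mem_maxClasses hc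
    choose y hy hconj using fun i => mem_sharp_cls.mp (hmem i)
    have := hx y (fun i => (hconj i).symm)
    have hle : Subgroup.closure (Set.range y) ≤ M := by
      rw [Subgroup.closure_le]
      rintro _ ⟨i, rfl⟩
      exact hy i
    rw [this] at hle
    exact hM.1 (top_le_iff.mp hle)

lemma ncard_sharp_lt [Finite G] {H : Subgroup G} (hH : H ≠ ⊤) :
    (sharp (cls H)).ncard < Nat.card G := by
  classical
  set N := Subgroup.normalizer (H : Set G) with hN
  set Q := G ⧸ N
  set D := Q × ↥((H : Set G) \ {1}) with hD
  set F : D → G := fun p => p.1.out * p.2.1 * p.1.out⁻¹ with hF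
  have hcover : sharp (cls H) \ {1} ⊆ Set.range F := by
    rintro x ⟨hx, hx1⟩
    simp only [Set.mem_singleton_iff] at hx1
    obtain ⟨h, hh, hconj⟩ := mem_sharp_cls.mp hx
    obtain ⟨g, hg⟩ := isConj_iff.mp hconj
    set q : Q := QuotientGroup.mk g with hq
    have hno : g⁻¹ * q.out ∈ N := by
      rw [← QuotientGroup.eq]
      exact (QuotientGroup.out_eq' q).symm ▸ rfl
    set n : G := g⁻¹ * q.out with hn
    have hmem : n⁻¹ * h * n ∈ H := by
      have h2 := (Subgroup.mem_normalizer_iff.mp hno (n⁻¹ * h * n)).mpr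
      apply h2
      group
      simpa [mul_assoc] using hh
    have hne : n⁻¹ * h * n ≠ 1 := by
      intro hcon
      apply hx1
      rw [← hg]
      have : h = 1 := by
        have := congrArg (fun z => n * z * n⁻¹) hcon
        simpa [mul_assoc] using this
      simp [this]
    refine ⟨⟨q, ⟨n⁻¹ * h * n, hmem, hne⟩⟩, ?_⟩
    show q.out * (n⁻¹ * h * n) * q.out⁻¹ = x
    have hout : q.out = g * n := by rw [hn]; group
    rw [hout, ← hg]
    group
  have hQcard : Nat.card Q = N.index := rfl
  have hHpos : 1 ≤ Nat.card H := Nat.card_pos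
  have hdiffcard : Nat.card ↥((H : Set G) \ {1}) = Nat.card H - 1 := by
    rw [Nat.card_coe_set_eq, Set.ncard_diff_singleton_of_mem H.one_mem]
    rw [← Nat.card_coe_set_eq]
    rfl
  have hb1 : (sharp (cls H) \ {1}).ncard ≤ N.index * (Nat.card H - 1) := by
    calc (sharp (cls H) \ {1}).ncard ≤ (Set.range F).ncard :=
          Set.ncard_le_ncard hcover (Set.toFinite _)
      _ ≤ Nat.card D := by
          rw [← Set.image_univ]
          exact le_trans (Set.ncard_image_le (Set.toFinite _)) (le_of_eq (Set.ncard_univ D))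
      _ = N.index * (Nat.card H - 1) := by rw [hD, Nat.card_prod, hQcard, hdiffcard]
  have hmain : (sharp (cls H)).ncard ≤ 1 + N.index * (Nat.card H - 1) := by
    have hsub : sharp (cls H) ⊆ insert 1 (sharp (cls H) \ {1}) := by
      intro x hx
      by_cases h1 : x = 1
      · exact h1 ▸ Set.mem_insert _ _
      · exact Set.mem_insert_of_mem _ ⟨hx, h1⟩
    calc (sharp (cls H)).ncard ≤ (insert 1 (sharp (cls H) \ {1})).ncard :=
          Set.ncard_le_ncard hsub (Set.toFinite _)
      _ ≤ (sharp (cls H) \ {1}).ncard + 1 := Set.ncard_insert_le _ _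
      _ ≤ 1 + N.index * (Nat.card H - 1) := by omega
  have hidx2 : 2 ≤ H.index := by
    have h0 : H.index ≠ 0 := Subgroup.index_ne_zero_of_finite
    have h1 : H.index ≠ 1 := fun hcon => hH (Subgroup.index_eq_one.mp hcon)
    omega
  have hNH : N.index ≤ H.index :=
    Nat.le_of_dvd (by omega) (Subgroup.index_dvd_of_le Subgroup.le_normalizer)
  have hcardG : H.index * Nat.card H = Nat.card G := Subgroup.index_mul_card H
  have hsplit : H.index * Nat.card H = H.index * (Nat.card H - 1) + H.index := by
    conv_lhs => rw [← Nat.sub_add_cancel hHpos]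
    ring
  calc (sharp (cls H)).ncard ≤ 1 + N.index * (Nat.card H - 1) := hmain
    _ ≤ 1 + H.index * (Nat.card H - 1) := by
        have := Nat.mul_le_mul_right (Nat.card H - 1) hNH
        omega
    _ < Nat.card G := by omega

lemma ncard_tuple [Finite G] (T : Set G) (n : ℕ) :
    Nat.card {x : Fin n → G | ∀ i, x i ∈ T} = Nat.card T ^ n := by
  have e : {x : Fin n → G | ∀ i, x i ∈ T} ≃ (Fin n → T) :=
    { toFun := fun x i => ⟨x.1 i, x.2 i⟩
      invFun := fun f => ⟨fun i => f i, fun i => (f i).2⟩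
      left_inv := fun x => rfl
      right_inv := fun f => rfl }
  rw [Nat.card_congr e, Nat.card_fun, Nat.card_eq_fintype_card (α := Fin n), Fintype.card_fin]

lemma nu_nonneg [Finite G] (A : Set G) : 0 ≤ nu G A :=
  div_nonneg (Nat.cast_nonneg _) (Nat.cast_nonneg _)

lemma card_cast_le_of_subset [Finite G] {A B : Set G} (h : A ⊆ B) :
    (Nat.card A : ℝ) ≤ Nat.card B := by
  exact_mod_cast (Nat.card_coe_set_eq A) ▸ (Nat.card_coe_set_eq B) ▸
    Set.ncard_le_ncard h (Set.toFinite _)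

lemma nu_mono [Finite G] {A B : Set G} (h : A ⊆ B) : nu G A ≤ nu G B :=
  by
  have hpos : (0:ℝ) < Nat.card G := by exact_mod_cast Nat.card_pos (α := G)
  exact div_le_div_of_nonneg_right (card_cast_le_of_subset h) hpos.le

lemma cardG_pos [Finite G] : 0 < Nat.card G := Nat.card_pos

lemma nu_sharp_lt_one [Finite G] {c : SubConjClass G} (hc : c ∈ maxClasses G) :
    nu G (sharp c) < 1 := by
  obtain ⟨H, rfl, hH⟩ := exists_of_mem_maxClasses hc
  rw [nu, div_lt_one (by exact_mod_cast cardG_pos (G := G))]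
  exact_mod_cast (Nat.card_coe_set_eq _) ▸ ncard_sharp_lt hH.1

lemma nu_lt_one [Finite G] {I : Finset (SubConjClass G)} (hI : I.Nonempty)
    (hsub : I ⊆ maxClasses G) : nu G (⋂ c ∈ I, sharp c) < 1 := by
  obtain ⟨c₀, hc₀⟩ := hI
  refine lt_of_le_of_lt ?_ (nu_sharp_lt_one (hsub hc₀))
  have : (⋂ c ∈ I, sharp c) ⊆ sharp c₀ := Set.biInter_subset_of_mem hc₀
  exact nu_mono this

end ChebAux

namespace ChebAux
open Chebotarev
variable {G : Type*} [Group G] [Finite G]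

lemma bad_eq_biUnion [Nontrivial G] (n : ℕ) :
    {x : Fin n → G | ¬ InvGen x} = ⋃ c ∈ maxClasses G, {x : Fin n → G | ∀ i, x i ∈ sharp c} := by
  ext x
  simp only [Set.mem_setOf_eq, Set.mem_iUnion, exists_prop]
  exact not_invGen_iff x

lemma card_toFinset_tuple (n : ℕ) (T : Set G) :
    ((Set.toFinite {x : Fin n → G | ∀ i, x i ∈ T}).toFinset).card = Nat.card T ^ n := by
  rw [← Set.ncard_eq_toFinset_card, ← Nat.card_coe_set_eq, ncard_tuple]

lemma card_bad_eq [Nontrivial G] (n : ℕ) :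
    (Nat.card {x : Fin n → G | ¬ InvGen x} : ℝ) =
      ∑ I ∈ (maxClasses G).powerset.filter Finset.Nonempty,
        (-1 : ℝ) ^ (I.card + 1) * (Nat.card (⋂ c ∈ I, sharp c) : ℝ) ^ n := by
  classical
  haveI : Fintype (Fin n → G) := Fintype.ofFinite _
  set Sf : SubConjClass G → Finset (Fin n → G) :=
    fun c => (Set.toFinite {x : Fin n → G | ∀ i, x i ∈ sharp c}).toFinset with hSf
  have hinf : ∀ I : Finset (SubConjClass G), I.Nonempty → I.inf Sf =
      (Set.toFinite {x : Fin n → G | ∀ i, x i ∈ ⋂ c ∈ I, sharp c}).toFinset := by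
    intro I hne
    ext x
    rw [← Finset.inf'_eq_inf hne, Finset.mem_inf']
    simp only [hSf, Set.Finite.mem_toFinset, Set.mem_setOf_eq, Set.mem_iInter]
    constructor
    · intro h i c hc
      exact h c hc i
    · intro h c hc i
      exact h i c hc
  have hbad : {x : Fin n → G | ¬ InvGen x} = ↑((maxClasses G).biUnion Sf) := by
    rw [bad_eq_biUnion n]
    ext x
    simp [hSf, Set.Finite.mem_toFinset]
  have hcard : (Nat.card {x : Fin n → G | ¬ InvGen x} : ℤ) =
      (((maxClasses G).biUnion Sf).card : ℤ) := by
    rw [hbad, Nat.card_coe_set_eq, Set.ncard_coe_finset]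
  have IE := Finset.inclusion_exclusion_card_biUnion (maxClasses G) Sf
  have step1 : (((maxClasses G).biUnion Sf).card : ℤ) =
      ∑ I ∈ (maxClasses G).powerset.filter Finset.Nonempty,
        (-1 : ℤ) ^ (I.card + 1) * ((I.inf Sf).card : ℤ) := by
    rw [IE]
    rw [← Finset.sum_coe_sort ((maxClasses G).powerset.filter Finset.Nonempty)
      (fun I => (-1 : ℤ) ^ (I.card + 1) * ((I.inf Sf).card : ℤ))]
    exact Finset.sum_congr rfl (fun t _ => by rw [Finset.inf'_eq_inf])
  have key : (Nat.card {x : Fin n → G | ¬ InvGen x} : ℤ) =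
      ∑ I ∈ (maxClasses G).powerset.filter Finset.Nonempty,
        (-1 : ℤ) ^ (I.card + 1) * ((Nat.card (⋂ c ∈ I, sharp c)) : ℤ) ^ n := by
    rw [hcard, step1]
    refine Finset.sum_congr rfl (fun I hI => ?_)
    have hne : I.Nonempty := (Finset.mem_filter.mp hI).2
    rw [hinf I hne, card_toFinset_tuple]
    push_cast
    ring
  exact_mod_cast key

lemma card_bad_le [Nontrivial G] (n : ℕ) :
    Nat.card {x : Fin n → G | ¬ InvGen x} ≤
      ∑ c ∈ maxClasses G, Nat.card (sharp c) ^ n := by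
  classical
  set Sf : SubConjClass G → Finset (Fin n → G) :=
    fun c => (Set.toFinite {x : Fin n → G | ∀ i, x i ∈ sharp c}).toFinset with hSf
  have hbad : {x : Fin n → G | ¬ InvGen x} = ↑((maxClasses G).biUnion Sf) := by
    rw [bad_eq_biUnion n]
    ext x
    simp [hSf, Set.Finite.mem_toFinset]
  have hcard : Nat.card {x : Fin n → G | ¬ InvGen x} = ((maxClasses G).biUnion Sf).card := by
    rw [hbad, Nat.card_coe_set_eq, Set.ncard_coe_finset]
  rw [hcard]
  refine le_trans Finset.card_biUnion_le (Finset.sum_le_sum fun c _ => ?_)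
  rw [card_toFinset_tuple]

end ChebAux

namespace ChebAux
open Chebotarev ENNReal
variable {G : Type*} [Group G] {Ω : Type*}

lemma sum_range_odd (m : ℕ) : ∑ n ∈ Finset.range m, (2 * n + 1) = m ^ 2 := by
  induction m with
  | zero => simp
  | succ k ih => rw [Finset.sum_range_succ, ih]; ring

lemma tau_sq_eq [Finite G] [Nontrivial G] (X : ℕ → Ω → G) (ω : Ω) :
    (tau X ω) ^ 2 = ∑' n : ℕ,
      Set.indicator {ω' : Ω | ¬ InvGen (fun i : Fin n => X i ω')}
        (fun _ => ((2 * n + 1 : ℕ) : ℝ≥0∞)) ω := by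
  classical
  set S : Set ℕ := {m : ℕ | 1 ≤ m ∧ InvGen (fun i : Fin m => X i ω)} with hS
  have hset : {t : ℝ≥0∞ | ∃ n : ℕ, t = n ∧ 1 ≤ n ∧ InvGen (fun i : Fin n => X i ω)}
      = (fun m : ℕ => (m : ℝ≥0∞)) '' S := by
    ext t
    simp only [Set.mem_setOf_eq, Set.mem_image, hS]
    constructor
    · rintro ⟨n, rfl, h1, h2⟩
      exact ⟨n, ⟨h1, h2⟩, rfl⟩
    · rintro ⟨n, ⟨h1, h2⟩, rfl⟩
      exact ⟨n, rfl, h1, h2⟩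
  have hind : ∀ n : ℕ, Set.indicator {ω' : Ω | ¬ InvGen (fun i : Fin n => X i ω')}
      (fun _ => ((2 * n + 1 : ℕ) : ℝ≥0∞)) ω
      = if ¬ InvGen (fun i : Fin n => X i ω) then ((2 * n + 1 : ℕ) : ℝ≥0∞) else 0 := by
    intro n
    rw [Set.indicator_apply]
    simp only [Set.mem_setOf_eq]
  by_cases hne : S.Nonempty
  · set m := sInf S with hm
    have hmS : m ∈ S := Nat.sInf_mem hne
    have htau : tau X ω = (m : ℝ≥0∞) := by
      rw [tau, hset]
      refine le_antisymm (sInf_le ⟨m, hmS, rfl⟩) (le_sInf ?_)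
      rintro t ⟨k, hk, rfl⟩
      exact_mod_cast Nat.cast_le.mpr (Nat.sInf_le hk)
    have hiff : ∀ n : ℕ, (¬ InvGen (fun i : Fin n => X i ω)) ↔ n < m := by
      intro n
      constructor
      · intro h
        by_contra hlt
        push_neg at hlt
        exact h (invGen_mono hlt (fun k => X k ω) hmS.2)
      · intro hlt h
        rcases Nat.eq_zero_or_pos n with rfl | hpos
        · exact not_invGen_zero _ h
        · have hnS : n ∈ S := ⟨hpos, h⟩
          have := Nat.sInf_le hnS
          omega
    have hsum : ∑' n : ℕ, (if ¬ InvGen (fun i : Fin n => X i ω)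
        then ((2 * n + 1 : ℕ) : ℝ≥0∞) else 0)
        = ∑ n ∈ Finset.range m, ((2 * n + 1 : ℕ) : ℝ≥0∞) := by
      rw [tsum_eq_sum (s := Finset.range m) ?_]
      · refine Finset.sum_congr rfl (fun n hn => ?_)
        rw [if_pos ((hiff n).mpr (Finset.mem_range.mp hn))]
      · intro n hn
        have hinv : InvGen (fun i : Fin n => X i ω) := by
          by_contra h
          exact hn (Finset.mem_range.mpr ((hiff n).mp h))
        rw [if_neg (not_not.mpr hinv)]
    rw [htau]
    rw [tsum_congr hind, hsum, ← Nat.cast_sum]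
    rw [sum_range_odd]
    push_cast
    ring
  · have htau : tau X ω = ⊤ := by
      rw [tau, hset, Set.not_nonempty_iff_eq_empty.mp hne, Set.image_empty, sInf_empty]
    have hnot : ∀ n : ℕ, ¬ InvGen (fun i : Fin n => X i ω) := by
      intro n h
      rcases Nat.eq_zero_or_pos n with rfl | hpos
      · exact not_invGen_zero _ h
      · exact hne ⟨n, hpos, h⟩
    rw [htau]
    have hifs : ∀ n : ℕ, (if ¬ InvGen (fun i : Fin n => X i ω)
        then ((2 * n + 1 : ℕ) : ℝ≥0∞) else 0) = ((2 * n + 1 : ℕ) : ℝ≥0∞) :=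
      fun n => if_pos (hnot n)
    rw [tsum_congr hind, tsum_congr hifs]
    rw [ENNReal.top_pow (by norm_num)]
    symm
    refine top_le_iff.mp ?_
    calc (⊤ : ℝ≥0∞) = ∑' _ : ℕ, (1 : ℝ≥0∞) :=
          (ENNReal.tsum_const_eq_top_of_ne_zero one_ne_zero).symm
      _ ≤ ∑' n : ℕ, ((2 * n + 1 : ℕ) : ℝ≥0∞) := by
          refine ENNReal.tsum_le_tsum (fun n => ?_)
          exact_mod_cast Nat.one_le_iff_ne_zero.mpr (by omega)

end ChebAux

namespace ChebAux
open Chebotarev MeasureTheory ProbabilityTheory ENNReal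

lemma summable_odd_geom {r : ℝ} (h0 : 0 ≤ r) (h1 : r < 1) :
    Summable (fun n : ℕ => ((2 * n + 1 : ℕ) : ℝ) * r ^ n) := by
  have hnorm : ‖r‖ < 1 := by rwa [Real.norm_eq_abs, abs_of_nonneg h0]
  have hs1 : Summable (fun n : ℕ => (n : ℝ) * r ^ n) := by
    simpa using summable_pow_mul_geometric_of_norm_lt_one 1 hnorm
  have hs2 : Summable (fun n : ℕ => r ^ n) := summable_geometric_of_lt_one h0 h1
  have heq : (fun n : ℕ => ((2 * n + 1 : ℕ) : ℝ) * r ^ n)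
      = fun n : ℕ => 2 * ((n : ℝ) * r ^ n) + r ^ n := by
    funext n
    push_cast
    ring
  rw [heq]
  exact ((hs1.mul_left 2).add hs2)

lemma tsum_odd_geom {r : ℝ} (h0 : 0 ≤ r) (h1 : r < 1) :
    ∑' n : ℕ, ((2 * n + 1 : ℕ) : ℝ) * r ^ n = (1 + r) / (1 - r) ^ 2 := by
  have hnorm : ‖r‖ < 1 := by rwa [Real.norm_eq_abs, abs_of_nonneg h0]
  have hs1 : Summable (fun n : ℕ => (n : ℝ) * r ^ n) := by
    simpa using summable_pow_mul_geometric_of_norm_lt_one 1 hnorm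
  have hs2 : Summable (fun n : ℕ => r ^ n) := summable_geometric_of_lt_one h0 h1
  have heq : (fun n : ℕ => ((2 * n + 1 : ℕ) : ℝ) * r ^ n)
      = fun n : ℕ => 2 * ((n : ℝ) * r ^ n) + r ^ n := by
    funext n
    push_cast
    ring
  have hne : (1 : ℝ) - r ≠ 0 := by linarith
  rw [heq, Summable.tsum_add (hs1.mul_left 2) hs2, tsum_mul_left,
    tsum_coe_mul_geometric_of_norm_lt_one hnorm, tsum_geometric_of_lt_one h0 h1]
  field_simp
  ring

variable {G : Type*} [Group G] [Finite G] {Ω : Type*} [MeasurableSpace Ω]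
  {P : Measure Ω} {X : ℕ → Ω → G}

lemma meas_tuple_event (hmeas : ∀ n, @Measurable Ω G _ ⊤ (X n)) (n : ℕ)
    (S : Set (Fin n → G)) :
    MeasurableSet {ω | (fun i : Fin n => X i ω) ∈ S} := by
  have hrep : {ω | (fun i : Fin n => X i ω) ∈ S} = ⋃ f ∈ S, ⋂ i : Fin n, X i ⁻¹' {f i} := by
    ext ω
    simp only [Set.mem_setOf_eq, Set.mem_iUnion, Set.mem_iInter, Set.mem_preimage,
      Set.mem_singleton_iff, exists_prop]
    constructor
    · intro h
      exact ⟨_, h, fun i => rfl⟩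
    · rintro ⟨f, hf, hh⟩
      rwa [show (fun i : Fin n => X i ω) = f from funext hh]
  rw [hrep]
  exact MeasurableSet.biUnion (Set.to_countable S)
    (fun f _ => MeasurableSet.iInter (fun i => hmeas i MeasurableSpace.measurableSet_top))

lemma meas_singleton_tuple (hmeas : ∀ n, @Measurable Ω G _ ⊤ (X n)) (n : ℕ) (f : Fin n → G) :
    MeasurableSet {ω | ∀ i : Fin n, X i ω = f i} := by
  have : {ω | ∀ i : Fin n, X i ω = f i} = ⋂ i : Fin n, X i ⁻¹' {f i} := by
    ext ω
    simp [Set.mem_iInter]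
  rw [this]
  exact MeasurableSet.iInter (fun i => hmeas i MeasurableSpace.measurableSet_top)

lemma prob_singleton_tuple (hX : IsChebSetup P X) (n : ℕ) (f : Fin n → G) :
    P {ω | ∀ i : Fin n, X i ω = f i} = ((Nat.card G : ℝ≥0∞)⁻¹) ^ n := by
  obtain ⟨hP, hmeas, hindep, hunif⟩ := hX
  classical
  set sets : ℕ → Set G := fun j => if h : j < n then {f ⟨j, h⟩} else Set.univ with hsets
  have key := hindep.measure_inter_preimage_eq_mul (Finset.range n) (sets := sets)
      (fun i _ => MeasurableSpace.measurableSet_top)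
  have hseteq : (⋂ i ∈ Finset.range n, X i ⁻¹' sets i) = {ω | ∀ i : Fin n, X i ω = f i} := by
    ext ω
    simp only [Set.mem_iInter, Finset.mem_range, Set.mem_preimage, Set.mem_setOf_eq]
    constructor
    · intro h i
      have h2 := h i.1 i.2
      rw [show sets i.1 = {f ⟨i.1, i.2⟩} from by simp [hsets, dif_pos i.2]] at h2
      simpa using h2
    · intro h j hj
      rw [show sets j = {f ⟨j, hj⟩} from by simp [hsets, dif_pos hj]]
      simpa using h ⟨j, hj⟩
  have hprod : ∀ i ∈ Finset.range n, P (X i ⁻¹' sets i) = (Nat.card G : ℝ≥0∞)⁻¹ := by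
    intro i hi
    rw [Finset.mem_range] at hi
    have h1 : X i ⁻¹' sets i = {ω | X i ω = f ⟨i, hi⟩} := by
      rw [show sets i = {f ⟨i, hi⟩} from by simp [hsets, dif_pos hi]]
      rfl
    rw [h1, hunif]
  rw [hseteq] at key
  rw [key, Finset.prod_congr rfl hprod, Finset.prod_const, Finset.card_range]

lemma prob_tuple_mem (hX : IsChebSetup P X) (n : ℕ) (S : Set (Fin n → G)) :
    P {ω | (fun i : Fin n => X i ω) ∈ S}
      = (Nat.card S : ℝ≥0∞) * ((Nat.card G : ℝ≥0∞)⁻¹) ^ n := by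
  classical
  have hE : {ω | (fun i : Fin n => X i ω) ∈ S} =
      ⋃ f ∈ (Set.toFinite S).toFinset, {ω | ∀ i : Fin n, X i ω = f i} := by
    ext ω
    simp only [Set.mem_setOf_eq, Set.mem_iUnion, Set.Finite.mem_toFinset, exists_prop]
    constructor
    · intro h
      exact ⟨_, h, fun i => rfl⟩
    · rintro ⟨f, hf, hh⟩
      rwa [show (fun i : Fin n => X i ω) = f from funext hh]
  rw [hE, measure_biUnion_finset ?_ (fun f _ => meas_singleton_tuple hX.2.1 n f)]
  · rw [Finset.sum_congr rfl (fun f _ => prob_singleton_tuple hX n f), Finset.sum_const,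
      nsmul_eq_mul]
    congr 1
    rw [← Set.ncard_eq_toFinset_card, ← Nat.card_coe_set_eq]
  · intro f hf g hg hfg
    refine Set.disjoint_left.mpr (fun ω h1 h2 => ?_)
    exact hfg (funext fun i => (h1 i).symm.trans (h2 i))

end ChebAux


/-- **Proposition (formula for the secondary Chebotarev invariant).** For a non-trivial finite
group `G`, `s(G) = ∑_{∅ ≠ I ⊆ max(G)} (-1)^{|I|+1} (1 + ν(𝓗_I♯)) / (1 - ν(𝓗_I♯))²`. -/
theorem secondary_chebotarev_invariant_formula {G : Type*} [Group G] [Finite G] [Nontrivial G]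
    {Ω : Type*} [MeasurableSpace Ω] (P : Measure Ω) (X : ℕ → Ω → G)
    (hX : IsChebSetup P X) :
    scheb P X = ∑ I ∈ (maxClasses G).powerset.filter Finset.Nonempty,
      (-1 : ℝ) ^ (I.card + 1) * (1 + nu G (⋂ c ∈ I, sharp c)) /
        (1 - nu G (⋂ c ∈ I, sharp c)) ^ 2 := by
  classical
  haveI : IsProbabilityMeasure P := hX.1
  have hcGpos : (0 : ℝ) < (Nat.card G : ℝ) := by exact_mod_cast Nat.card_pos (α := G)
  set F := (maxClasses G).powerset.filter Finset.Nonempty with hF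
  have hq0 : ∀ I ∈ F, (0 : ℝ) ≤ nu G (⋂ c ∈ I, sharp c) := fun I _ => ChebAux.nu_nonneg _
  have hq1 : ∀ I ∈ F, nu G (⋂ c ∈ I, sharp c) < 1 := by
    intro I hI
    rw [hF, Finset.mem_filter, Finset.mem_powerset] at hI
    exact ChebAux.nu_lt_one hI.2 hI.1
  set pR : ℕ → ℝ :=
    fun n => (Nat.card {x : Fin n → G | ¬ InvGen x} : ℝ) / (Nat.card G : ℝ) ^ n with hpR
  have hpR0 : ∀ n, 0 ≤ pR n := fun n => div_nonneg (Nat.cast_nonneg _) (by positivity)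
  have hIE : ∀ n, pR n = ∑ I ∈ F, (-1 : ℝ) ^ (I.card + 1) * (nu G (⋂ c ∈ I, sharp c)) ^ n := by
    intro n
    rw [hpR]
    simp only
    rw [ChebAux.card_bad_eq n, Finset.sum_div]
    refine Finset.sum_congr rfl (fun I hI => ?_)
    simp only [nu]
    rw [div_pow]
    ring
  have hprobE : ∀ n : ℕ,
      P {ω | ¬ InvGen (fun i : Fin n => X i ω)} = ENNReal.ofReal (pR n) := by
    intro n
    have h1 : P {ω | ¬ InvGen (fun i : Fin n => X i ω)}
        = (Nat.card {x : Fin n → G | ¬ InvGen x} : ℝ≥0∞) * ((Nat.card G : ℝ≥0∞)⁻¹) ^ n :=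
      ChebAux.prob_tuple_mem hX n {x : Fin n → G | ¬ InvGen x}
    rw [h1, hpR]
    simp only
    rw [ENNReal.ofReal_div_of_pos (by positivity), ENNReal.ofReal_pow hcGpos.le,
      ENNReal.ofReal_natCast, ENNReal.ofReal_natCast, div_eq_mul_inv,
      ← ENNReal.inv_pow]
  have hEmeas : ∀ n : ℕ, MeasurableSet {ω | ¬ InvGen (fun i : Fin n => X i ω)} :=
    fun n => ChebAux.meas_tuple_event hX.2.1 n {x : Fin n → G | ¬ InvGen x}
  have hlin : ∫⁻ ω, (tau X ω) ^ 2 ∂P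
      = ∑' n : ℕ, ((2 * n + 1 : ℕ) : ℝ≥0∞) * P {ω | ¬ InvGen (fun i : Fin n => X i ω)} := by
    rw [lintegral_congr (fun ω => ChebAux.tau_sq_eq X ω)]
    rw [lintegral_tsum (fun n => (measurable_const.indicator (hEmeas n)).aemeasurable)]
    exact tsum_congr (fun n => lintegral_indicator_const (hEmeas n) _)
  have hbound : ∀ n : ℕ, pR n ≤ ∑ c ∈ maxClasses G, (nu G (sharp c)) ^ n := by
    intro n
    have h1 : (Nat.card {x : Fin n → G | ¬ InvGen x} : ℝ)
        ≤ ∑ c ∈ maxClasses G, (Nat.card (sharp c) : ℝ) ^ n := by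
      exact_mod_cast ChebAux.card_bad_le (G := G) n
    rw [hpR]
    simp only
    rw [div_le_iff₀ (by positivity)]
    refine le_trans h1 (le_of_eq ?_)
    rw [Finset.sum_mul]
    refine Finset.sum_congr rfl (fun c hc => ?_)
    simp only [nu]
    rw [div_pow]
    field_simp
  have hsumm : Summable (fun n : ℕ => ((2 * n + 1 : ℕ) : ℝ) * pR n) := by
    refine Summable.of_nonneg_of_le
      (g := fun n : ℕ => ((2 * n + 1 : ℕ) : ℝ) * pR n)
      (f := fun n : ℕ => ∑ c ∈ maxClasses G, ((2 * n + 1 : ℕ) : ℝ) * (nu G (sharp c)) ^ n)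
      (fun n => mul_nonneg (Nat.cast_nonneg _) (hpR0 n)) (fun n => ?_) ?_
    · show ((2 * n + 1 : ℕ) : ℝ) * pR n
          ≤ ∑ c ∈ maxClasses G, ((2 * n + 1 : ℕ) : ℝ) * (nu G (sharp c)) ^ n
      rw [← Finset.mul_sum]
      exact mul_le_mul_of_nonneg_left (hbound n) (Nat.cast_nonneg _)
    · exact summable_sum (fun c hc =>
        ChebAux.summable_odd_geom (ChebAux.nu_nonneg _) (ChebAux.nu_sharp_lt_one hc))
  have hnneg : ∀ n : ℕ, (0:ℝ) ≤ ((2 * n + 1 : ℕ) : ℝ) * pR n :=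
    fun n => mul_nonneg (Nat.cast_nonneg _) (hpR0 n)
  have hmain : ∫⁻ ω, (tau X ω) ^ 2 ∂P
      = ENNReal.ofReal (∑' n : ℕ, ((2 * n + 1 : ℕ) : ℝ) * pR n) := by
    rw [hlin, ENNReal.ofReal_tsum_of_nonneg hnneg hsumm]
    refine tsum_congr (fun n => ?_)
    rw [hprobE n, ENNReal.ofReal_mul (by positivity), ENNReal.ofReal_natCast]
  show (∫⁻ ω, (tau X ω) ^ 2 ∂P).toReal = _
  rw [hmain, ENNReal.toReal_ofReal (tsum_nonneg hnneg)]
  have hswap : ∑' n : ℕ, ((2 * n + 1 : ℕ) : ℝ) * pR n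
      = ∑ I ∈ F, ∑' n : ℕ,
          (-1 : ℝ) ^ (I.card + 1) * (((2 * n + 1 : ℕ) : ℝ) * (nu G (⋂ c ∈ I, sharp c)) ^ n) := by
    rw [← Summable.tsum_finsetSum (fun I hI => Summable.mul_left _
      (ChebAux.summable_odd_geom (hq0 I hI) (hq1 I hI)))]
    refine tsum_congr (fun n => ?_)
    rw [hIE n, Finset.mul_sum]
    exact Finset.sum_congr rfl (fun I hI => by ring)
  rw [hswap]
  refine Finset.sum_congr rfl (fun I hI => ?_)
  rw [tsum_mul_left, ChebAux.tsum_odd_geom (hq0 I hI) (hq1 I hI),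
    mul_div_assoc]
end
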